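/- For every C_β > 0 there exists a constant C₁ > 0, depending only on C_β, with the following property. Let N ≥ 1 be an integer, ε := 1/N, φ''_F, φ''_{2F} ∈ ℝ, and let β : ℤ → [0,1] be 2N-periodic with interface set I := {ℓ ∈ {−N+1,…,N} : 0 < β_{ℓ+j} < 1 for some j ∈ {−2,−1,1,2}} of cardinality K ≥ 1; assume (D^{(j)}β)_ℓ = 0 for all ℓ ∉ I and j = 1,2,3, and ‖D^{(j)}β‖_{ℓ∞} ≤ C_β (Kε)^{−j} for j = 1,2,3. Then for every u ∈ U, ⟨L^{bqcf} u, u⟩ ≥ (c₀ − C₁ |φ''_{2F}| K^{−5/2} ε^{−1/2}) ‖Du‖²_{ℓ²_ε}, where c₀ := min(φ''_F, φ''_F + 4φ''_{2F}). -/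

import Mathlib

open Finset

noncomputable section

/-- mesh size ε = 1/N -/
def eps (N : ℕ) : ℝ := 1 / N

/-- the periodic cell {-N+1, …, N} -/
def cell (N : ℕ) : Finset ℤ := Finset.Icc (-(N : ℤ) + 1) N

/-- 2N-periodicity -/
def Per (N : ℕ) (u : ℤ → ℝ) : Prop := ∀ ℓ : ℤ, u (ℓ + 2 * N) = u ℓ

/-- zero mean over a period -/
def MeanZero (N : ℕ) (u : ℤ → ℝ) : Prop := ∑ ℓ ∈ cell N, u ℓ = 0

/-- first discrete derivative (Du)_ℓ = (u_ℓ - u_{ℓ-1})/ε -/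
def D (N : ℕ) (u : ℤ → ℝ) (ℓ : ℤ) : ℝ := (u ℓ - u (ℓ - 1)) / eps N

/-- second discrete derivative (D²u)_ℓ = ((Du)_{ℓ+1} - (Du)_ℓ)/ε -/
def D2 (N : ℕ) (u : ℤ → ℝ) (ℓ : ℤ) : ℝ := (D N u (ℓ + 1) - D N u ℓ) / eps N

/-- third discrete derivative (D³u)_ℓ = ((D²u)_ℓ - (D²u)_{ℓ-1})/ε -/
def D3 (N : ℕ) (u : ℤ → ℝ) (ℓ : ℤ) : ℝ := (D2 N u ℓ - D2 N u (ℓ - 1)) / eps N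

/-- the ℓ²_ε inner product ⟨u,w⟩ = ε Σ u_ℓ w_ℓ -/
def ip (N : ℕ) (u w : ℤ → ℝ) : ℝ := ∑ ℓ ∈ cell N, eps N * (u ℓ * w ℓ)

/-- the squared ℓ²_ε norm ‖u‖² = ε Σ |u_ℓ|² -/
def nsq (N : ℕ) (u : ℤ → ℝ) : ℝ := ∑ ℓ ∈ cell N, eps N * |u ℓ| ^ 2

attribute [local instance] Classical.propDecidable

/-- the interface (blending) index set -/
def interf (N : ℕ) (β : ℤ → ℝ) : Finset ℤ :=
  (cell N).filter fun ℓ =>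
    ∃ j ∈ ({-2, -1, 1, 2} : Finset ℤ), 0 < β (ℓ + j) ∧ β (ℓ + j) < 1

/-- linearized B-QCF operator
`(L^{bqcf} v)_ℓ := φ''_F (−v_{ℓ+1}+2v_ℓ−v_{ℓ−1})/ε²
  + φ''_{2F}[β_ℓ(−v_{ℓ+2}+2v_ℓ−v_{ℓ−2})/ε² + (1−β_ℓ)·4·(−v_{ℓ+1}+2v_ℓ−v_{ℓ−1})/ε²]` -/
def Lbqcf (N : ℕ) (cF c2F : ℝ) (β : ℤ → ℝ) (v : ℤ → ℝ) (ℓ : ℤ) : ℝ :=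
  cF * (-v (ℓ + 1) + 2 * v ℓ - v (ℓ - 1)) / eps N ^ 2
    + c2F * (β ℓ * (-v (ℓ + 2) + 2 * v ℓ - v (ℓ - 2)) / eps N ^ 2
        + (1 - β ℓ) * 4 * (-v (ℓ + 1) + 2 * v ℓ - v (ℓ - 1)) / eps N ^ 2)

private lemma sq_diff_le (a b : ℝ) : (a - b)^2 ≤ 2*a^2 + 2*b^2 := by
  nlinarith [sq_nonneg (a+b)]

private lemma abs_mul_le_half (a b : ℝ) : |a*b| ≤ (a^2+b^2)/2 := by
  rw [abs_mul]
  nlinarith [sq_nonneg (|a|-|b|), sq_abs a, sq_abs b, abs_nonneg a, abs_nonneg b]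

private lemma icc_insert_top {a b : ℤ} (h : a ≤ b + 1) :
    Finset.Icc a (b+1) = insert (b+1) (Finset.Icc a b) := by
  ext x; simp only [Finset.mem_Icc, Finset.mem_insert]; omega

private lemma sum_icc_top (f : ℤ → ℝ) {a b : ℤ} (h : a ≤ b + 1) :
    ∑ ℓ ∈ Finset.Icc a (b+1), f ℓ = (∑ ℓ ∈ Finset.Icc a b, f ℓ) + f (b+1) := by
  rw [icc_insert_top h, Finset.sum_insert (by simp only [Finset.mem_Icc]; omega)]; ring

private lemma sum_shift_one {N : ℕ} (hN : 1 ≤ N) (f : ℤ → ℝ) (hf : Per N f) :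
    ∑ ℓ ∈ cell N, f (ℓ + 1) = ∑ ℓ ∈ cell N, f ℓ := by
  have hN' : (1:ℤ) ≤ (N:ℤ) := by exact_mod_cast hN
  have hmap : ∑ ℓ ∈ cell N, f (ℓ + 1)
      = ∑ ℓ ∈ Finset.Icc (-(N:ℤ)+1+1) ((N:ℤ)+1), f ℓ := by
    rw [← Finset.map_add_right_Icc]
    rw [Finset.sum_map]
    rfl
  have htop : ∑ ℓ ∈ Finset.Icc (-(N:ℤ)+1+1) ((N:ℤ)+1), f ℓ
      = (∑ ℓ ∈ Finset.Icc (-(N:ℤ)+1+1) (N:ℤ), f ℓ) + f ((N:ℤ)+1) :=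
    sum_icc_top f (by omega)
  have hbot : ∑ ℓ ∈ cell N, f ℓ
      = f (-(N:ℤ)+1) + ∑ ℓ ∈ Finset.Icc (-(N:ℤ)+1+1) (N:ℤ), f ℓ := by
    have : cell N = insert (-(N:ℤ)+1) (Finset.Icc (-(N:ℤ)+1+1) (N:ℤ)) := by
      ext x; simp only [cell, Finset.mem_Icc, Finset.mem_insert]; omega
    rw [this, Finset.sum_insert (by simp only [Finset.mem_Icc]; omega)]
  have hper : f ((N:ℤ)+1) = f (-(N:ℤ)+1) := by
    have := hf (-(N:ℤ)+1)
    rw [show -(N:ℤ)+1 + 2*(N:ℤ) = (N:ℤ)+1 by ring] at this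
    exact this
  rw [hmap, htop, hbot, hper]; ring

private lemma per_comp {N : ℕ} {f : ℤ → ℝ} (hf : Per N f) (c : ℤ) :
    Per N (fun ℓ => f (ℓ + c)) := by
  intro ℓ
  show f (ℓ + 2*(N:ℤ) + c) = f (ℓ + c)
  rw [show ℓ + 2*(N:ℤ) + c = (ℓ + c) + 2*(N:ℤ) by ring]
  exact hf _

private lemma sum_shift {N : ℕ} (hN : 1 ≤ N) (f : ℤ → ℝ) (hf : Per N f) (k : ℤ) :
    ∑ ℓ ∈ cell N, f (ℓ + k) = ∑ ℓ ∈ cell N, f ℓ := by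
  induction k using Int.induction_on with
  | zero => simp
  | succ i ih =>
      have h1 := sum_shift_one hN (fun ℓ => f (ℓ + i)) (per_comp hf i)
      have h2 : ∑ ℓ ∈ cell N, f (ℓ + ((i:ℤ)+1)) = ∑ ℓ ∈ cell N, f (ℓ + 1 + i) :=
        Finset.sum_congr rfl fun ℓ _ => by rw [show ℓ + ((i:ℤ)+1) = ℓ + 1 + i by ring]
      rw [h2]
      rw [show (∑ ℓ ∈ cell N, f (ℓ + 1 + i)) = ∑ ℓ ∈ cell N, (fun x => f (x + i)) (ℓ + 1) from rfl]
      rw [h1]; exact ih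
  | pred i ih =>
      have h1 := sum_shift_one hN (fun ℓ => f (ℓ + (-(i:ℤ)-1))) (per_comp hf (-(i:ℤ)-1))
      have h2 : ∑ ℓ ∈ cell N, (fun x => f (x + (-(i:ℤ)-1))) (ℓ + 1) = ∑ ℓ ∈ cell N, f (ℓ + -(i:ℤ)) :=
        Finset.sum_congr rfl fun ℓ _ => by
          show f (ℓ + 1 + (-(i:ℤ)-1)) = f (ℓ + -(i:ℤ))
          rw [show ℓ + 1 + (-(i:ℤ)-1) = ℓ + -(i:ℤ) by ring]
      rw [h2] at h1
      rw [show (∑ ℓ ∈ cell N, f (ℓ + (-(i:ℤ)-1))) = ∑ ℓ ∈ cell N, (fun x => f (x + (-(i:ℤ)-1))) ℓ from rfl] at h1 ⊢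
      rw [← h1]; exact ih

private lemma sum_tele' {N : ℕ} (hN : 1 ≤ N) (g h : ℤ → ℝ) (hh : Per N h)
    (hgh : ∀ ℓ, g ℓ = h (ℓ+1) - h ℓ) : ∑ ℓ ∈ cell N, g ℓ = 0 := by
  rw [Finset.sum_congr rfl fun ℓ _ => hgh ℓ, Finset.sum_sub_distrib,
    sum_shift_one hN h hh, sub_self]

private lemma per_all {N : ℕ} {f : ℤ → ℝ} (hf : Per N f) (j : ℤ) (ℓ : ℤ) :
    f (ℓ + 2*(N:ℤ)*j) = f ℓ := by
  induction j using Int.induction_on with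
  | zero => simp
  | succ i ih =>
      rw [show ℓ + 2*(N:ℤ)*((i:ℤ)+1) = (ℓ + 2*(N:ℤ)*(i:ℤ)) + 2*(N:ℤ) by ring, hf, ih]
  | pred i ih =>
      have h1 := hf (ℓ + 2*(N:ℤ)*(-(i:ℤ)-1))
      rw [show ℓ + 2*(N:ℤ)*(-(i:ℤ)-1) + 2*(N:ℤ) = ℓ + 2*(N:ℤ)*(-(i:ℤ)) by ring] at h1
      rw [← h1]; exact ih

private lemma cell_card (N : ℕ) : ((cell N).card : ℤ) = 2*N := by
  simp only [cell, Int.card_Icc]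
  omega

private lemma mem_reduce {N : ℕ} (hN : 1 ≤ N) {f : ℤ → ℝ} (hf : Per N f) (m : ℤ) :
    ∃ m' ∈ cell N, f m = f m' := by
  have h2N : (0:ℤ) < 2*(N:ℤ) := by positivity
  set q := (m + (N:ℤ) - 1) / (2*(N:ℤ)) with hq
  set r := (m + (N:ℤ) - 1) % (2*(N:ℤ)) with hr
  have hdm : 2*(N:ℤ) * q + r = m + (N:ℤ) - 1 := Int.mul_ediv_add_emod _ _
  have hr0 : 0 ≤ r := Int.emod_nonneg _ (by omega)
  have hrlt : r < 2*(N:ℤ) := Int.emod_lt_of_pos _ h2N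
  refine ⟨r - (N:ℤ) + 1, ?_, ?_⟩
  · simp only [cell, Finset.mem_Icc]; omega
  · have := per_all hf q (r - (N:ℤ) + 1)
    rw [show r - (N:ℤ) + 1 + 2*(N:ℤ)*q = m by omega] at this
    exact this

private lemma tele_sum {u : ℤ → ℝ} (j m : ℤ) (h : j ≤ m) :
    u m - u j = ∑ ℓ ∈ Finset.Icc (j+1) m, (u ℓ - u (ℓ-1)) := by
  obtain ⟨n, rfl⟩ := Int.le.dest h
  clear h
  induction n with
  | zero =>
      rw [show Finset.Icc (j+1) (j+(0:ℕ)) = ∅ from Finset.Icc_eq_empty (by omega)]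
      simp
  | succ n ih =>
      rw [show j + ((n+1 : ℕ) : ℤ) = (j + (n:ℕ)) + 1 by push_cast; ring]
      rw [sum_icc_top _ (by omega), ← ih, show j+((n:ℕ):ℤ)+1-1 = j+((n:ℕ):ℤ) by ring]
      ring

private lemma usup {N : ℕ} (hN : 1 ≤ N) {u : ℤ → ℝ} (hu : Per N u) (hz : MeanZero N u)
    (m : ℤ) : |u m| ≤ ∑ ℓ ∈ cell N, |u ℓ - u (ℓ-1)| := by
  set M := ∑ ℓ ∈ cell N, |u ℓ - u (ℓ-1)| with hM
  -- pairwise bound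
  have hpair : ∀ j ∈ cell N, ∀ m' ∈ cell N, |u m' - u j| ≤ M := by
    have key : ∀ j ∈ cell N, ∀ m' ∈ cell N, j ≤ m' → |u m' - u j| ≤ M := by
      intro j hj m' hm' hle
      rw [tele_sum j m' hle]
      refine le_trans (Finset.abs_sum_le_sum_abs _ _) ?_
      apply Finset.sum_le_sum_of_subset_of_nonneg
      · intro x hx
        simp only [Finset.mem_Icc] at hx
        simp only [cell, Finset.mem_Icc] at hj hm' ⊢
        omega
      · intro _ _ _; exact abs_nonneg _
    intro j hj m' hm'
    rcases le_total j m' with h | h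
    · exact key j hj m' hm' h
    · rw [abs_sub_comm]; exact key m' hm' j hj h
  -- reduce to cell
  obtain ⟨m', hm', hmm⟩ := mem_reduce hN hu m
  rw [hmm]
  -- mean zero trick
  have hcard : ((cell N).card : ℝ) = 2*(N:ℝ) := by
    have := cell_card N
    exact_mod_cast this
  have hsum : ∑ j ∈ cell N, (u m' - u j) = (2*(N:ℝ)) * u m' := by
    rw [Finset.sum_sub_distrib, hz, Finset.sum_const, sub_zero, nsmul_eq_mul, hcard]
  have h1 : |(2*(N:ℝ)) * u m'| ≤ (2*(N:ℝ)) * M := by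
    rw [← hsum]
    refine le_trans (Finset.abs_sum_le_sum_abs _ _) ?_
    calc ∑ j ∈ cell N, |u m' - u j| ≤ ∑ _j ∈ cell N, M :=
          Finset.sum_le_sum fun j hj => hpair j hj m' hm'
      _ = (2*(N:ℝ)) * M := by rw [Finset.sum_const, nsmul_eq_mul, hcard]
  have hNpos : (0:ℝ) < 2*(N:ℝ) := by
    have : (1:ℝ) ≤ (N:ℝ) := by exact_mod_cast hN
    linarith
  rw [abs_mul, abs_of_pos hNpos] at h1
  calc |u m'| = (2*(N:ℝ))⁻¹ * ((2*(N:ℝ)) * |u m'|) := by field_simp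
    _ ≤ (2*(N:ℝ))⁻¹ * ((2*(N:ℝ)) * M) := by
        apply mul_le_mul_of_nonneg_left h1 (by positivity)
    _ = M := by field_simp

set_option maxHeartbeats 2000000 in
/-- coercivity of the B-QCF operator:
`⟨L^{bqcf}u,u⟩ ≥ (c₀ − C₁|φ''_{2F}| K^{−5/2} ε^{−1/2}) ‖Du‖²`. -/
theorem stmt_10 (Cβ : ℝ) (hCβ : 0 < Cβ) :
    ∃ C₁ : ℝ, 0 < C₁ ∧
      ∀ N : ℕ, 1 ≤ N → ∀ cF c2F : ℝ, ∀ β : ℤ → ℝ, Per N β →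
        (∀ ℓ : ℤ, β ℓ ∈ Set.Icc (0 : ℝ) 1) →
        1 ≤ (interf N β).card →
        (∀ ℓ ∈ cell N, ℓ ∉ interf N β →
          D N β ℓ = 0 ∧ D2 N β ℓ = 0 ∧ D3 N β ℓ = 0) →
        (∀ ℓ ∈ cell N, |D N β ℓ| ≤ Cβ * (((interf N β).card : ℝ) * eps N)⁻¹) →
        (∀ ℓ ∈ cell N, |D2 N β ℓ| ≤ Cβ * ((((interf N β).card : ℝ) * eps N) ^ 2)⁻¹) →
        (∀ ℓ ∈ cell N, |D3 N β ℓ| ≤ Cβ * ((((interf N β).card : ℝ) * eps N) ^ 3)⁻¹) →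
        ∀ u : ℤ → ℝ, Per N u → MeanZero N u →
          ip N (Lbqcf N cF c2F β u) u
            ≥ (min cF (cF + 4 * c2F)
                - C₁ * |c2F| * ((interf N β).card : ℝ) ^ (-(5 : ℝ) / 2)
                    * eps N ^ (-(1 : ℝ) / 2)) * nsq N (D N u) := by
  refine ⟨5 * Cβ, by positivity, ?_⟩
  intro N hN cF c2F β hβper hβ01 hK hIoff hb1 hb2 hb3 u hu hz
  have hNR : (1:ℝ) ≤ (N:ℝ) := by exact_mod_cast hN
  have hepos : 0 < eps N := by rw [eps]; positivity
  have hene : eps N ≠ 0 := ne_of_gt hepos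
  have heN : (N:ℝ) * eps N = 1 := by rw [eps]; field_simp
  have hIsub : interf N β ⊆ cell N :=
    by unfold interf; exact Finset.filter_subset _ _
  set k : ℝ := ((interf N β).card : ℝ) with hkdef
  clear_value k
  have hk1 : (1:ℝ) ≤ k := by rw [hkdef]; exact_mod_cast hK
  have hk0 : (0:ℝ) < k := lt_of_lt_of_le one_pos hk1
  have hcardcell : ((cell N).card : ℝ) = 2*(N:ℝ) := by
    have := cell_card N; exact_mod_cast this
  have hke : k * eps N ≤ 2 := by
    have h1 : k ≤ 2*(N:ℝ) := by
      rw [hkdef, ← hcardcell]; exact_mod_cast Finset.card_le_card hIsub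
    calc k * eps N ≤ (2*(N:ℝ)) * eps N :=
          mul_le_mul_of_nonneg_right h1 hepos.le
      _ = 2 := by rw [mul_assoc, heN]; ring
  have hum1 : ∀ x:ℤ, u (x + 2*(N:ℤ) - 1) = u (x - 1) := fun x => by
    rw [show x + 2*(N:ℤ) - 1 = (x-1) + 2*(N:ℤ) by ring]; exact hu _
  have hum2 : ∀ x:ℤ, u (x + 2*(N:ℤ) - 2) = u (x - 2) := fun x => by
    rw [show x + 2*(N:ℤ) - 2 = (x-2) + 2*(N:ℤ) by ring]; exact hu _
  have hup1 : ∀ x:ℤ, u (x + 2*(N:ℤ) + 1) = u (x + 1) := fun x => by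
    rw [show x + 2*(N:ℤ) + 1 = (x+1) + 2*(N:ℤ) by ring]; exact hu _
  have hβm1 : ∀ x:ℤ, β (x + 2*(N:ℤ) - 1) = β (x - 1) := fun x => by
    rw [show x + 2*(N:ℤ) - 1 = (x-1) + 2*(N:ℤ) by ring]; exact hβper _
  have hβm2 : ∀ x:ℤ, β (x + 2*(N:ℤ) - 2) = β (x - 2) := fun x => by
    rw [show x + 2*(N:ℤ) - 2 = (x-2) + 2*(N:ℤ) by ring]; exact hβper _
  set B := ∑ ℓ ∈ cell N, (u ℓ - u (ℓ-1))^2 with hBdef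
  set Mb := ∑ ℓ ∈ cell N, |u ℓ - u (ℓ-1)| with hMdef
  set T := ∑ ℓ ∈ cell N, β ℓ * (u (ℓ+2) - 4*u (ℓ+1) + 6*u ℓ - 4*u (ℓ-1) + u (ℓ-2)) * u ℓ with hTdef
  set P := ∑ ℓ ∈ cell N, β ℓ * (u (ℓ+1) - 2*u ℓ + u (ℓ-1))^2 with hPdef
  set R1 := ∑ ℓ ∈ cell N, (β (ℓ+1) - 2*β ℓ + β (ℓ-1)) * (u ℓ - u (ℓ-1))^2 with hR1def
  set R2 := ∑ ℓ ∈ cell N, (β (ℓ+1) - 2*β ℓ + β (ℓ-1)) * ((u ℓ - u (ℓ-1)) * (u (ℓ-1) - u (ℓ-2))) with hR2def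
  set R3 := ∑ ℓ ∈ cell N, (β (ℓ+1) - 3*β ℓ + 3*β (ℓ-1) - β (ℓ-2)) * ((u ℓ - u (ℓ-1)) * u (ℓ-2)) with hR3def
  have hB0 : 0 ≤ B := by rw [hBdef]; exact Finset.sum_nonneg fun ℓ _ => sq_nonneg _
  have hperb2 : Per N (fun ℓ => (u ℓ - u (ℓ-1))^2) := by
    intro x; show (u (x + 2*(N:ℤ)) - u (x + 2*(N:ℤ) - 1))^2 = _
    rw [hu, hum1]
  have hnsq : nsq N (D N u) = B / eps N := by
    rw [hBdef]
    simp only [nsq, D]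
    rw [Finset.sum_div]
    refine Finset.sum_congr rfl fun ℓ _ => ?_
    rw [sq_abs]
    field_simp
  -- Step 1 : ip = ((cF+4c2F)B - c2F T)/eps
  have hip : ip N (Lbqcf N cF c2F β u) u = ((cF + 4*c2F) * B - c2F * T) / eps N := by
    have hpt : ∀ ℓ : ℤ, eps N * (Lbqcf N cF c2F β u ℓ * u ℓ)
        = ((cF + 4*c2F) * (u ℓ - u (ℓ-1))^2
            - c2F * (β ℓ * (u (ℓ+2) - 4*u (ℓ+1) + 6*u ℓ - 4*u (ℓ-1) + u (ℓ-2)) * u ℓ)) / eps N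
          + (cF + 4*c2F) * (((-(u (ℓ+1) * u ℓ) + u ℓ^2) - (-(u ℓ * u (ℓ-1)) + u (ℓ-1)^2)) / eps N) := by
      intro ℓ
      simp only [Lbqcf]
      field_simp
      ring
    have h1 : ip N (Lbqcf N cF c2F β u) u
        = ∑ ℓ ∈ cell N, (((cF + 4*c2F) * (u ℓ - u (ℓ-1))^2
            - c2F * (β ℓ * (u (ℓ+2) - 4*u (ℓ+1) + 6*u ℓ - 4*u (ℓ-1) + u (ℓ-2)) * u ℓ)) / eps N
          + (cF + 4*c2F) * (((-(u (ℓ+1) * u ℓ) + u ℓ^2) - (-(u ℓ * u (ℓ-1)) + u (ℓ-1)^2)) / eps N)) := by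
      simp only [ip]
      exact Finset.sum_congr rfl fun ℓ _ => hpt ℓ
    rw [h1, Finset.sum_add_distrib, ← Finset.mul_sum]
    have htele : ∑ ℓ ∈ cell N,
        (((-(u (ℓ+1) * u ℓ) + u ℓ^2) - (-(u ℓ * u (ℓ-1)) + u (ℓ-1)^2)) / eps N) = 0 := by
      refine sum_tele' hN _ (fun x => (-(u x * u (x-1)) + u (x-1)^2) / eps N) ?_ ?_
      · intro x
        show (-(u (x + 2*(N:ℤ)) * u (x + 2*(N:ℤ) - 1)) + u (x + 2*(N:ℤ) - 1)^2) / eps N = _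
        rw [hu, hum1]
      · intro ℓ
        show (-(u (ℓ+1) * u ℓ) + u ℓ^2 - (-(u ℓ * u (ℓ-1)) + u (ℓ-1)^2)) / eps N
            = (-(u (ℓ+1) * u (ℓ+1-1)) + u (ℓ+1-1)^2) / eps N
              - (-(u ℓ * u (ℓ-1)) + u (ℓ-1)^2) / eps N
        rw [show (ℓ:ℤ)+1-1 = ℓ by ring]; ring
    rw [htele, mul_zero, add_zero, ← Finset.sum_div]
    congr 1
    rw [Finset.sum_sub_distrib, ← Finset.mul_sum, ← Finset.mul_sum, ← hBdef, ← hTdef]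
  -- Step 2 : T = P - R1 - R2 - R3
  set H1 : ℤ → ℝ := fun ℓ =>
    -(β (ℓ-2) * u (ℓ-2) * u (ℓ-1)) + β (ℓ-2) * u (ℓ-2) * u ℓ
    + 2*(β (ℓ-1) * u (ℓ-2) * u (ℓ-1)) - 2*(β (ℓ-1) * u (ℓ-2) * u ℓ)
    + β (ℓ-1) * u (ℓ-1) * u (ℓ+1) - β (ℓ-1) * u ℓ^2
    - β ℓ * u (ℓ-2) * u (ℓ-1) + β ℓ * u (ℓ-1)^2 with hH1def
  have hH1per : Per N H1 := by
    intro x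
    simp only [hH1def]
    rw [hβm2, hβm1, hβper, hum2, hum1, hu, hup1]
  have hT : T = P - R1 - R2 - R3 := by
    have h0 : ∑ ℓ ∈ cell N,
        (β ℓ * (u (ℓ+2) - 4*u (ℓ+1) + 6*u ℓ - 4*u (ℓ-1) + u (ℓ-2)) * u ℓ
          - (β ℓ * (u (ℓ+1) - 2*u ℓ + u (ℓ-1))^2
             - (β (ℓ+1) - 2*β ℓ + β (ℓ-1)) * (u ℓ - u (ℓ-1))^2
             - (β (ℓ+1) - 2*β ℓ + β (ℓ-1)) * ((u ℓ - u (ℓ-1)) * (u (ℓ-1) - u (ℓ-2)))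
             - (β (ℓ+1) - 3*β ℓ + 3*β (ℓ-1) - β (ℓ-2)) * ((u ℓ - u (ℓ-1)) * u (ℓ-2)))) = 0 := by
      refine sum_tele' hN _ H1 hH1per ?_
      intro ℓ
      simp only [hH1def]
      rw [show (ℓ:ℤ)+1-2 = ℓ-1 by ring, show (ℓ:ℤ)+1-1 = ℓ by ring,
        show (ℓ:ℤ)+1+1 = ℓ+2 by ring]
      ring
    rw [Finset.sum_sub_distrib, Finset.sum_sub_distrib, Finset.sum_sub_distrib,
      Finset.sum_sub_distrib, ← hTdef, ← hPdef, ← hR1def, ← hR2def, ← hR3def] at h0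
    linarith only [h0]
  -- bounds on P
  have hP0 : 0 ≤ P := by
    rw [hPdef]
    exact Finset.sum_nonneg fun ℓ _ => mul_nonneg (hβ01 ℓ).1 (sq_nonneg _)
  have hsh1 : ∑ ℓ ∈ cell N, (u (ℓ+1) - u ℓ)^2 = B := by
    have hs := sum_shift hN (fun ℓ => (u ℓ - u (ℓ-1))^2) hperb2 1
    rw [hBdef]
    rw [← hs]
    refine Finset.sum_congr rfl fun ℓ _ => ?_
    show (u (ℓ+1) - u ℓ)^2 = (u (ℓ+1) - u (ℓ+1-1))^2
    rw [show (ℓ:ℤ)+1-1 = ℓ by ring]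
  have hP4 : P ≤ 4*B := by
    have h1 : P ≤ ∑ ℓ ∈ cell N, (u (ℓ+1) - 2*u ℓ + u (ℓ-1))^2 := by
      rw [hPdef]
      exact Finset.sum_le_sum fun ℓ _ => mul_le_of_le_one_left (sq_nonneg _) (hβ01 ℓ).2
    have h2 : ∑ ℓ ∈ cell N, (u (ℓ+1) - 2*u ℓ + u (ℓ-1))^2
        ≤ ∑ ℓ ∈ cell N, (2*(u (ℓ+1) - u ℓ)^2 + 2*(u ℓ - u (ℓ-1))^2) :=
      Finset.sum_le_sum fun ℓ _ => by
        linarith [sq_diff_le (u (ℓ+1) - u ℓ) (u ℓ - u (ℓ-1))]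
    have h3 : ∑ ℓ ∈ cell N, (2*(u (ℓ+1) - u ℓ)^2 + 2*(u ℓ - u (ℓ-1))^2) = 4*B := by
      rw [Finset.sum_add_distrib, ← Finset.mul_sum, ← Finset.mul_sum, hsh1, ← hBdef]
      ring
    linarith only [h1, h2, h3]
  -- discrete derivative formulas for β
  have hD2f : ∀ ℓ : ℤ, D2 N β ℓ = (β (ℓ+1) - 2*β ℓ + β (ℓ-1)) / eps N^2 := by
    intro ℓ
    simp only [D2, D]
    rw [show (ℓ:ℤ)+1-1 = ℓ by ring]
    field_simp; ring
  have hD3f : ∀ ℓ : ℤ, D3 N β ℓ = (β (ℓ+1) - 3*β ℓ + 3*β (ℓ-1) - β (ℓ-2)) / eps N^3 := by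
    intro ℓ
    simp only [D3, D2, D]
    rw [show (ℓ:ℤ)+1-1 = ℓ by ring, show (ℓ:ℤ)-1+1 = ℓ by ring,
      show (ℓ:ℤ)-1-1 = ℓ-2 by ring]
    field_simp; ring
  have hceq : ∀ ℓ : ℤ, eps N^2 * D2 N β ℓ = β (ℓ+1) - 2*β ℓ + β (ℓ-1) := by
    intro ℓ; rw [hD2f ℓ]; field_simp
  have hdeq : ∀ ℓ : ℤ, eps N^3 * D3 N β ℓ = β (ℓ+1) - 3*β ℓ + 3*β (ℓ-1) - β (ℓ-2) := by
    intro ℓ; rw [hD3f ℓ]; field_simp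
  have hcb : ∀ ℓ ∈ cell N, |β (ℓ+1) - 2*β ℓ + β (ℓ-1)| ≤ Cβ / k^2 := by
    intro ℓ hℓ
    calc |β (ℓ+1) - 2*β ℓ + β (ℓ-1)| = eps N^2 * |D2 N β ℓ| := by
          rw [← hceq ℓ, abs_mul, abs_of_pos (pow_pos hepos 2)]
      _ ≤ eps N^2 * (Cβ * ((k * eps N)^2)⁻¹) :=
          mul_le_mul_of_nonneg_left (hb2 ℓ hℓ) (by positivity)
      _ = Cβ / k^2 := by
          rw [mul_pow, mul_inv]
          have he2 : (eps N^2) * (eps N^2)⁻¹ = 1 := mul_inv_cancel₀ (pow_ne_zero _ hene)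
          linear_combination (Cβ * (k^2)⁻¹) * he2
  have hdb : ∀ ℓ ∈ cell N, |β (ℓ+1) - 3*β ℓ + 3*β (ℓ-1) - β (ℓ-2)| ≤ Cβ / k^3 := by
    intro ℓ hℓ
    calc |β (ℓ+1) - 3*β ℓ + 3*β (ℓ-1) - β (ℓ-2)| = eps N^3 * |D3 N β ℓ| := by
          rw [← hdeq ℓ, abs_mul, abs_of_pos (pow_pos hepos 3)]
      _ ≤ eps N^3 * (Cβ * ((k * eps N)^3)⁻¹) :=
          mul_le_mul_of_nonneg_left (hb3 ℓ hℓ) (by positivity)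
      _ = Cβ / k^3 := by
          rw [mul_pow, mul_inv]
          have he3 : (eps N^3) * (eps N^3)⁻¹ = 1 := mul_inv_cancel₀ (pow_ne_zero _ hene)
          linear_combination (Cβ * (k^3)⁻¹) * he3
  have hdz : ∀ ℓ ∈ cell N, ℓ ∉ interf N β →
      β (ℓ+1) - 3*β ℓ + 3*β (ℓ-1) - β (ℓ-2) = 0 := by
    intro ℓ h1 h2
    rw [← hdeq ℓ, (hIoff ℓ h1 h2).2.2, mul_zero]
  -- shifted sum equals B
  have hB' : ∑ ℓ ∈ cell N, (u (ℓ-1) - u (ℓ-2))^2 = B := by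
    have hs := sum_shift hN (fun ℓ => (u ℓ - u (ℓ-1))^2) hperb2 (-1)
    rw [hBdef, ← hs]
    refine Finset.sum_congr rfl fun ℓ _ => ?_
    show (u (ℓ-1) - u (ℓ-2))^2 = (u (ℓ + -1) - u (ℓ + -1 - 1))^2
    rw [show (ℓ:ℤ) + -1 = ℓ-1 by ring, show (ℓ:ℤ)-1-1 = ℓ-2 by ring]
  -- bounds on R1, R2
  have hR1b : |R1| ≤ Cβ/k^2 * B := by
    rw [hR1def]
    calc |∑ ℓ ∈ cell N, (β (ℓ+1) - 2*β ℓ + β (ℓ-1)) * (u ℓ - u (ℓ-1))^2|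
        ≤ ∑ ℓ ∈ cell N, |(β (ℓ+1) - 2*β ℓ + β (ℓ-1)) * (u ℓ - u (ℓ-1))^2| :=
          Finset.abs_sum_le_sum_abs _ _
      _ ≤ ∑ ℓ ∈ cell N, Cβ/k^2 * (u ℓ - u (ℓ-1))^2 :=
          Finset.sum_le_sum fun ℓ hℓ => by
            rw [abs_mul, abs_sq]
            exact mul_le_mul_of_nonneg_right (hcb ℓ hℓ) (sq_nonneg _)
      _ = Cβ/k^2 * B := by rw [← Finset.mul_sum, ← hBdef]
  have hR2b : |R2| ≤ Cβ/k^2 * B := by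
    rw [hR2def]
    calc |∑ ℓ ∈ cell N, (β (ℓ+1) - 2*β ℓ + β (ℓ-1)) * ((u ℓ - u (ℓ-1)) * (u (ℓ-1) - u (ℓ-2)))|
        ≤ ∑ ℓ ∈ cell N, |(β (ℓ+1) - 2*β ℓ + β (ℓ-1)) * ((u ℓ - u (ℓ-1)) * (u (ℓ-1) - u (ℓ-2)))| :=
          Finset.abs_sum_le_sum_abs _ _
      _ ≤ ∑ ℓ ∈ cell N, Cβ/k^2 * (((u ℓ - u (ℓ-1))^2 + (u (ℓ-1) - u (ℓ-2))^2)/2) :=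
          Finset.sum_le_sum fun ℓ hℓ => by
            rw [abs_mul]
            have habs2 : |(u ℓ - u (ℓ-1)) * (u (ℓ-1) - u (ℓ-2))|
                ≤ ((u ℓ - u (ℓ-1))^2 + (u (ℓ-1) - u (ℓ-2))^2)/2 :=
              abs_mul_le_half _ _
            exact mul_le_mul (hcb ℓ hℓ) habs2 (abs_nonneg _) (by positivity)
      _ = Cβ/k^2 * ((B + B)/2) := by
          rw [← Finset.mul_sum]
          congr 1
          rw [← Finset.sum_div, Finset.sum_add_distrib, hB', ← hBdef]
      _ = Cβ/k^2 * B := by ring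
  -- sup bound and Cauchy-Schwarz
  have hMb0 : 0 ≤ Mb := by rw [hMdef]; exact Finset.sum_nonneg fun ℓ _ => abs_nonneg _
  have hMb : ∀ m:ℤ, |u m| ≤ Mb := fun m => by rw [hMdef]; exact usup hN hu hz m
  have hMbB : Mb ≤ Real.sqrt (2*(N:ℝ)) * Real.sqrt B := by
    have hcs := Finset.sum_mul_sq_le_sq_mul_sq (cell N) (fun _ => (1:ℝ))
      (fun ℓ => |u ℓ - u (ℓ-1)|)
    simp only [one_pow, one_mul, sq_abs, Finset.sum_const, nsmul_eq_mul, mul_one] at hcs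
    have hcs' : Mb^2 ≤ (2*(N:ℝ)) * B := by
      rw [hMdef, hBdef]
      calc (∑ ℓ ∈ cell N, |u ℓ - u (ℓ-1)|)^2
          ≤ ((cell N).card : ℝ) * ∑ ℓ ∈ cell N, (u ℓ - u (ℓ-1))^2 := hcs
        _ = (2*(N:ℝ)) * ∑ ℓ ∈ cell N, (u ℓ - u (ℓ-1))^2 := by rw [hcardcell]
    calc Mb = Real.sqrt (Mb^2) := (Real.sqrt_sq hMb0).symm
      _ ≤ Real.sqrt ((2*(N:ℝ)) * B) := Real.sqrt_le_sqrt hcs'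
      _ = Real.sqrt (2*(N:ℝ)) * Real.sqrt B := Real.sqrt_mul (by positivity) _
  have hIb0 : 0 ≤ ∑ ℓ ∈ interf N β, |u ℓ - u (ℓ-1)| :=
    Finset.sum_nonneg fun ℓ _ => abs_nonneg _
  have hIbB : ∑ ℓ ∈ interf N β, |u ℓ - u (ℓ-1)| ≤ Real.sqrt k * Real.sqrt B := by
    have hcs := Finset.sum_mul_sq_le_sq_mul_sq (interf N β) (fun _ => (1:ℝ))
      (fun ℓ => |u ℓ - u (ℓ-1)|)
    simp only [one_pow, one_mul, sq_abs, Finset.sum_const, nsmul_eq_mul, mul_one] at hcs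
    have hsub : ∑ ℓ ∈ interf N β, (u ℓ - u (ℓ-1))^2 ≤ B := by
      rw [hBdef]
      exact Finset.sum_le_sum_of_subset_of_nonneg hIsub fun ℓ _ _ => sq_nonneg _
    have hcs' : (∑ ℓ ∈ interf N β, |u ℓ - u (ℓ-1)|)^2 ≤ k * B := by
      calc (∑ ℓ ∈ interf N β, |u ℓ - u (ℓ-1)|)^2
          ≤ ((interf N β).card : ℝ) * ∑ ℓ ∈ interf N β, (u ℓ - u (ℓ-1))^2 := hcs
        _ ≤ k * B := by
            rw [← hkdef]
            exact mul_le_mul_of_nonneg_left hsub hk0.le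
    calc ∑ ℓ ∈ interf N β, |u ℓ - u (ℓ-1)|
        = Real.sqrt ((∑ ℓ ∈ interf N β, |u ℓ - u (ℓ-1)|)^2) := (Real.sqrt_sq hIb0).symm
      _ ≤ Real.sqrt (k * B) := Real.sqrt_le_sqrt hcs'
      _ = Real.sqrt k * Real.sqrt B := Real.sqrt_mul hk0.le _
  -- bound on R3
  have hR3b : |R3| ≤ Cβ/k^3 * ((Real.sqrt (2*(N:ℝ)) * Real.sqrt B) * (Real.sqrt k * Real.sqrt B)) := by
    have hsub : R3 = ∑ ℓ ∈ interf N β,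
        (β (ℓ+1) - 3*β ℓ + 3*β (ℓ-1) - β (ℓ-2)) * ((u ℓ - u (ℓ-1)) * u (ℓ-2)) := by
      rw [hR3def]
      exact (Finset.sum_subset hIsub fun ℓ hℓ hni => by rw [hdz ℓ hℓ hni, zero_mul]).symm
    rw [hsub]
    calc |∑ ℓ ∈ interf N β, (β (ℓ+1) - 3*β ℓ + 3*β (ℓ-1) - β (ℓ-2)) * ((u ℓ - u (ℓ-1)) * u (ℓ-2))|
        ≤ ∑ ℓ ∈ interf N β, |(β (ℓ+1) - 3*β ℓ + 3*β (ℓ-1) - β (ℓ-2)) * ((u ℓ - u (ℓ-1)) * u (ℓ-2))| :=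
          Finset.abs_sum_le_sum_abs _ _
      _ ≤ ∑ ℓ ∈ interf N β, Cβ/k^3 * (|u ℓ - u (ℓ-1)| * Mb) :=
          Finset.sum_le_sum fun ℓ hℓ => by
            rw [abs_mul, abs_mul]
            refine mul_le_mul (hdb ℓ (hIsub hℓ)) ?_ (by positivity) (by positivity)
            exact mul_le_mul_of_nonneg_left (hMb (ℓ-2)) (abs_nonneg _)
      _ = Cβ/k^3 * ((∑ ℓ ∈ interf N β, |u ℓ - u (ℓ-1)|) * Mb) := by
          rw [← Finset.mul_sum, ← Finset.sum_mul]
      _ ≤ Cβ/k^3 * ((Real.sqrt k * Real.sqrt B) * (Real.sqrt (2*(N:ℝ)) * Real.sqrt B)) := by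
          refine mul_le_mul_of_nonneg_left ?_ (by positivity)
          exact mul_le_mul hIbB hMbB hMb0 (by positivity)
      _ = Cβ/k^3 * ((Real.sqrt (2*(N:ℝ)) * Real.sqrt B) * (Real.sqrt k * Real.sqrt B)) := by ring
  -- rpow algebra
  set Z := k ^ (-(5:ℝ)/2) * eps N ^ (-(1:ℝ)/2) with hZdef
  have hsqk : 0 < Real.sqrt k := Real.sqrt_pos.mpr hk0
  have hsqe : 0 < Real.sqrt (eps N) := Real.sqrt_pos.mpr hepos
  have hkk : Real.sqrt k * Real.sqrt k = k := Real.mul_self_sqrt hk0.le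
  have hBB : Real.sqrt B * Real.sqrt B = B := Real.mul_self_sqrt hB0
  have hZeq : Z = (k^2)⁻¹ * (Real.sqrt k)⁻¹ * (Real.sqrt (eps N))⁻¹ := by
    rw [hZdef]
    have e1 : k ^ (-(5:ℝ)/2) = (k^2)⁻¹ * (Real.sqrt k)⁻¹ := by
      rw [show (-(5:ℝ)/2) = (-((2:ℕ):ℝ)) + (-(1/2 : ℝ)) by norm_num, Real.rpow_add hk0,
        Real.rpow_neg hk0.le, Real.rpow_natCast, Real.rpow_neg hk0.le, ← Real.sqrt_eq_rpow]
    have e2 : eps N ^ (-(1:ℝ)/2) = (Real.sqrt (eps N))⁻¹ := by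
      rw [show (-(1:ℝ)/2) = -(1/2 : ℝ) by norm_num, Real.rpow_neg hepos.le,
        ← Real.sqrt_eq_rpow]
    rw [e1, e2]
  have hsqNe : (Real.sqrt (eps N))⁻¹ = Real.sqrt (N:ℝ) := by
    have h1 : Real.sqrt (N:ℝ) * Real.sqrt (eps N) = 1 := by
      rw [← Real.sqrt_mul (by positivity), heN, Real.sqrt_one]
    field_simp
    linarith only [h1]
  have hZpos : 0 < Z := by rw [hZeq]; positivity
  have hR3Z : |R3| ≤ Real.sqrt 2 * Cβ * Z * B := by
    have hkey : Cβ/k^3 * ((Real.sqrt (2*(N:ℝ)) * Real.sqrt B) * (Real.sqrt k * Real.sqrt B))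
        = Real.sqrt 2 * Cβ * Z * B := by
      rw [hZeq, hsqNe, Real.sqrt_mul (by norm_num : (0:ℝ) ≤ 2) (N:ℝ)]
      have hsk : Real.sqrt k ≠ 0 := ne_of_gt hsqk
      field_simp
      linear_combination (Real.sqrt k)^2 * hBB + B * hkk
    rw [← hkey]; exact hR3b
  have hcoef : Cβ/k^2 ≤ Real.sqrt 2 * Cβ * Z := by
    have h1 : Real.sqrt k * Real.sqrt (eps N) ≤ Real.sqrt 2 := by
      rw [← Real.sqrt_mul hk0.le]; exact Real.sqrt_le_sqrt hke
    have h2 : (1:ℝ) ≤ Real.sqrt 2 * (Real.sqrt k * Real.sqrt (eps N))⁻¹ := by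
      rw [← div_eq_mul_inv]
      exact (one_le_div (by positivity)).mpr h1
    calc Cβ/k^2 = (Cβ * (k^2)⁻¹) * 1 := by ring
      _ ≤ (Cβ * (k^2)⁻¹) * (Real.sqrt 2 * (Real.sqrt k * Real.sqrt (eps N))⁻¹) :=
          mul_le_mul_of_nonneg_left h2 (by positivity)
      _ = Real.sqrt 2 * Cβ * Z := by rw [hZeq, mul_inv]; ring
  have hs2 : Real.sqrt 2 ≤ 5/3 := by
    have h := Real.sqrt_le_sqrt (by norm_num : (2:ℝ) ≤ (5/3)^2)
    rwa [Real.sqrt_sq (by norm_num : (0:ℝ) ≤ 5/3)] at h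
  have hRsum : |R1 + R2 + R3| ≤ 5*Cβ*Z*B := by
    have c1 : |R1| ≤ Real.sqrt 2 * Cβ * Z * B :=
      hR1b.trans (mul_le_mul_of_nonneg_right hcoef hB0)
    have c2 : |R2| ≤ Real.sqrt 2 * Cβ * Z * B :=
      hR2b.trans (mul_le_mul_of_nonneg_right hcoef hB0)
    have t1 : |R1 + R2 + R3| ≤ |R1 + R2| + |R3| := abs_add_le _ _
    have t2 : |R1 + R2| ≤ |R1| + |R2| := abs_add_le _ _
    have hX0 : 0 ≤ Cβ*Z*B := by positivity
    have t3 : Real.sqrt 2 * (Cβ*Z*B) ≤ (5/3)*(Cβ*Z*B) := mul_le_mul_of_nonneg_right hs2 hX0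
    linarith only [c1, c2, hR3Z, t1, t2, t3]
  -- final assembly
  rw [ge_iff_le, hip, hT, hnsq]
  have hc2abs : -(|c2F| * (5*Cβ*Z*B)) ≤ c2F * (R1+R2+R3) := by
    have h1 : -(|c2F * (R1+R2+R3)|) ≤ c2F * (R1+R2+R3) := neg_abs_le _
    have h2 : |c2F * (R1+R2+R3)| = |c2F| * |R1+R2+R3| := abs_mul _ _
    have h3 : |c2F| * |R1+R2+R3| ≤ |c2F| * (5*Cβ*Z*B) :=
      mul_le_mul_of_nonneg_left hRsum (abs_nonneg _)
    linarith only [h1, h2, h3]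
  have core : (min cF (cF + 4*c2F) - 5*Cβ*|c2F| * Z) * B
      ≤ (cF + 4*c2F)*B - c2F*(P - R1 - R2 - R3) := by
    rcases le_total 0 c2F with hsgn | hsgn
    · have h1 : c2F * P ≤ c2F * (4*B) := mul_le_mul_of_nonneg_left hP4 hsgn
      have h2 : min cF (cF + 4*c2F) * B ≤ cF * B :=
        mul_le_mul_of_nonneg_right (min_le_left _ _) hB0
      linarith only [h1, h2, hc2abs]
    · have h1 : c2F * P ≤ 0 := mul_nonpos_iff.mpr (Or.inr ⟨hsgn, hP0⟩)
      have h2 : min cF (cF + 4*c2F) * B ≤ (cF + 4*c2F) * B :=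
        mul_le_mul_of_nonneg_right (min_le_right _ _) hB0
      linarith only [h1, h2, hc2abs]
  refine le_trans (le_of_eq ?_) ((div_le_div_iff_of_pos_right hepos).mpr core)
  rw [hZdef]
  ring
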